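/- Let a₁ < … < a_N be positive integers with gcd(a₁, …, a_N) = 1 and let I ⊆ ℕ \ ⟨a₁, …, a_N⟩. Then there exists K ∈ ℕ such that for all β > K there exists a linear recurrence of order exactly β with a non-trivial solution vanishing on all of I. -/
import Mathlib


theorem stmt_9 (N : ℕ) (a : Fin (N + 1) → ℕ)
    (ha : StrictMono a) (hapos : ∀ i, 0 < a i)
    (hgcd : Finset.univ.gcd a = 1)
    (I : Set ℕ)
    (hI : I ⊆ {k : ℕ | ¬ ∃ n : Fin (N + 1) → ℕ, k = ∑ i, n i * a i}) :
    ∃ K : ℕ, ∀ β : ℕ, K < β →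
      ∃ (α : ℕ → ℂ) (g : ℕ → ℂ),
        α β ≠ 0 ∧
        (∃ k, g k ≠ 0) ∧
        (∀ k, β ≤ k → g k + ∑ i ∈ Finset.Icc 1 β, α i * g (k - i) = 0) ∧
        (∀ k ∈ I, g k = 0) := by
  classical
  -- Step 1: Bezout — gcd 1 gives an integer combination equal to 1.
  have key : ∃ c : Fin (N + 1) → ℤ, ∑ i, c i * (a i : ℤ) = 1 := by
    have h1 : (1 : ℤ) ∈ Submodule.span ℤ (Set.range (fun i => ((a i : ℤ)))) := by
      obtain ⟨g, hg⟩ := (IsPrincipalIdealRing.principal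
        (Ideal.span (Set.range (fun i => ((a i : ℤ))))))
      have hdvd : ∀ i, g ∣ (a i : ℤ) := by
        intro i
        have : (a i : ℤ) ∈ Ideal.span (Set.range (fun i => ((a i : ℤ)))) :=
          Ideal.subset_span ⟨i, rfl⟩
        rw [hg, Ideal.submodule_span_eq, Ideal.mem_span_singleton] at this
        exact this
      have hdvd' : g.natAbs ∣ Finset.univ.gcd a := by
        apply Finset.dvd_gcd
        intro i _
        have := Int.natAbs_dvd_natAbs.2 (hdvd i)
        simpa using this
      rw [hgcd, Nat.dvd_one] at hdvd'
      have hunit : IsUnit g := Int.isUnit_iff.2 (by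
        rcases Int.natAbs_eq g with h | h
        · left; omega
        · right; omega)
      have : Ideal.span (Set.range (fun i => ((a i : ℤ)))) = ⊤ := by
        rw [hg, Ideal.submodule_span_eq, Ideal.span_singleton_eq_top]
        exact hunit
      show (1 : ℤ) ∈ Ideal.span (Set.range (fun i => ((a i : ℤ))))
      rw [this]
      trivial
    rw [Submodule.mem_span_range_iff_exists_fun ℤ] at h1
    obtain ⟨c, hc⟩ := h1
    exact ⟨c, by simpa [smul_eq_mul] using hc⟩
  obtain ⟨c, hc⟩ := key
  -- positive and negative parts
  set pos : Fin (N + 1) → ℕ := fun i => (c i).toNat with hpos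
  set neg : Fin (N + 1) → ℕ := fun i => (-(c i)).toNat with hneg
  set P : ℕ := ∑ i, pos i * a i with hP
  set Nn : ℕ := ∑ i, neg i * a i with hNn
  have hPN : P = Nn + 1 := by
    have : (P : ℤ) - (Nn : ℤ) = 1 := by
      push_cast [hP, hNn]
      rw [← Finset.sum_sub_distrib]
      rw [← hc]
      apply Finset.sum_congr rfl
      intro i _
      have : ((c i).toNat : ℤ) - ((-(c i)).toNat : ℤ) = c i := by omega
      rw [← sub_mul]
      rw [this]
    rw [hP, hNn] at this ⊢
    omega
  -- every k ≥ Nn^2 is representable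
  have hrep : ∀ k : ℕ, Nn ^ 2 ≤ k → ∃ n : Fin (N + 1) → ℕ, k = ∑ i, n i * a i := by
    intro k hk
    by_cases hN0 : Nn = 0
    · -- P = 1, so k = k • P
      refine ⟨fun i => k * pos i, ?_⟩
      have : ∑ i, (k * pos i) * a i = k * P := by
        rw [hP, Finset.mul_sum]
        apply Finset.sum_congr rfl
        intro i _; ring
      rw [this, hPN, hN0]
      ring
    · have hNpos : 0 < Nn := Nat.pos_of_ne_zero hN0
      set q := k / Nn with hq
      set r := k % Nn with hr
      have hrq : r < q := by
        have h1 : r < Nn := Nat.mod_lt _ hNpos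
        have h2 : Nn ≤ q := by
          rw [hq]
          rw [Nat.le_div_iff_mul_le hNpos]
          nlinarith [hk]
        omega
      refine ⟨fun i => (q - r) * neg i + r * pos i, ?_⟩
      have : ∑ i, ((q - r) * neg i + r * pos i) * a i = (q - r) * Nn + r * P := by
        rw [hP, hNn, Finset.mul_sum, Finset.mul_sum, ← Finset.sum_add_distrib]
        apply Finset.sum_congr rfl
        intro i _; ring
      rw [this, hPN]
      have hdm : Nn * q + r = k := by rw [hq, hr]; exact Nat.div_add_mod k Nn
      have hqr : r ≤ q := le_of_lt hrq
      calc k = Nn * q + r := by omega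
        _ = (q - r) * Nn + r * (Nn + 1) := by
            have : q = (q - r) + r := by omega
            nlinarith [Nat.sub_add_cancel hqr]
  -- so every element of I is < Nn^2
  have hIbound : ∀ k ∈ I, k < Nn ^ 2 := by
    intro k hk
    by_contra h
    exact hI hk (hrep k (by omega))
  refine ⟨Nn ^ 2, ?_⟩
  intro β hβ
  have hβ0 : 0 < β := by omega
  refine ⟨fun i => if i = β then 1 else 0,
    fun k => (-1 : ℂ) ^ (k / β) * (if k % β ∈ I then 0 else 1), ?_, ?_, ?_, ?_⟩
  · simp
  · refine ⟨0, ?_⟩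
    have h0 : (0 : ℕ) ∉ I := by
      intro h
      exact hI h ⟨fun _ => 0, by simp⟩
    simp [Nat.zero_mod, h0]
  · intro k hk
    have hsum : ∑ i ∈ Finset.Icc 1 β, (if i = β then (1:ℂ) else 0) *
        ((-1 : ℂ) ^ ((k - i) / β) * (if (k - i) % β ∈ I then 0 else 1)) =
        (-1 : ℂ) ^ ((k - β) / β) * (if (k - β) % β ∈ I then 0 else 1) := by
      rw [Finset.sum_eq_single β]
      · simp
      · intro i _ hi; simp [hi]
      · intro h; exact absurd (Finset.mem_Icc.2 ⟨hβ0, le_refl β⟩) h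
    rw [hsum]
    have hdiv : k / β = (k - β) / β + 1 := Nat.div_eq_sub_div hβ0 hk
    have hmod : k % β = (k - β) % β := Nat.mod_eq_sub_mod hk
    simp only [hdiv, ← hmod]
    ring
  · intro k hk
    have hkb : k < β := lt_of_lt_of_le (hIbound k hk) (le_of_lt hβ)
    simp [Nat.mod_eq_of_lt hkb, hk]
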